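/- Let v > 0, w > 0 and T = 2π/w. The function F(A) := (1/T)·∫₀^T √(v² − A² w² cos²(w t)) dt is continuous and strictly decreasing on [0, v/w], with F(0) = v and F(v/w) = 2v/π; consequently F is a bijection from [0, v/w] onto [2v/π, v], so every desired average parametric velocity in [2v/π, v] is realized by a unique oscillation amplitude A ∈ [0, v/w]. -/

import Mathlib

open intervalIntegral Set

lemma abs_sin_integral_two_pi : ∫ x in (0:ℝ)..(2*Real.pi), |Real.sin x| = 4 := by
  have hi : ∀ a b : ℝ, IntervalIntegrable (fun x => |Real.sin x|) MeasureTheory.volume a b :=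
    fun a b => (continuous_abs.comp Real.continuous_sin).intervalIntegrable a b
  rw [← intervalIntegral.integral_add_adjacent_intervals (b := Real.pi) (hi _ _) (hi _ _)]
  have h1 : ∫ x in (0:ℝ)..Real.pi, |Real.sin x| = 2 := by
    rw [intervalIntegral.integral_congr (g := Real.sin)
      (fun x hx => by
        rw [uIcc_of_le Real.pi_pos.le] at hx
        exact abs_of_nonneg (Real.sin_nonneg_of_nonneg_of_le_pi hx.1 hx.2))]
    simp [integral_sin]
    norm_num
  have h2 : ∫ x in Real.pi..(2*Real.pi), |Real.sin x| = 2 := by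
    rw [intervalIntegral.integral_congr (g := fun x => -Real.sin x)
      (fun x hx => by
        rw [uIcc_of_le (by linarith [Real.pi_pos])] at hx
        have h := Real.sin_nonneg_of_nonneg_of_le_pi (x := x - Real.pi)
          (by linarith [hx.1]) (by linarith [hx.2])
        rw [Real.sin_sub_pi] at h
        exact abs_of_nonpos (by linarith))]
    simp [integral_sin, Real.cos_two_pi]
    norm_num
  linarith

theorem average_parametric_velocity_bijective (v w T : ℝ)
    (hv : 0 < v) (hw : 0 < w) (hT : T = 2 * Real.pi / w)
    (F : ℝ → ℝ)
    (hF : ∀ A : ℝ, F A = (1 / T) * ∫ t in (0:ℝ)..T,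
        Real.sqrt (v ^ 2 - A ^ 2 * w ^ 2 * Real.cos (w * t) ^ 2)) :
    ContinuousOn F (Set.Icc 0 (v / w)) ∧
    StrictAntiOn F (Set.Icc 0 (v / w)) ∧
    F 0 = v ∧
    F (v / w) = 2 * v / Real.pi ∧
    Set.BijOn F (Set.Icc 0 (v / w)) (Set.Icc (2 * v / Real.pi) v) := by
  have hπ := Real.pi_pos
  have hT0 : 0 < T := by rw [hT]; positivity
  set g : ℝ → ℝ → ℝ := fun A t => Real.sqrt (v ^ 2 - A ^ 2 * w ^ 2 * Real.cos (w * t) ^ 2)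
    with hg
  have hgc : Continuous (Function.uncurry g) := by
    unfold Function.uncurry; fun_prop
  have hcF : Continuous F := by
    have : Continuous fun A => (1 / T) * ∫ t in (0:ℝ)..T, g A t :=
      continuous_const.mul
        (intervalIntegral.continuous_parametric_intervalIntegral_of_continuous' hgc 0 T)
    exact this.congr fun A => (hF A).symm
  -- F 0 = v
  have hF0 : F 0 = v := by
    rw [hF]
    simp [Real.sqrt_sq hv.le, hT0.ne']
  -- F (v/w) = 2v/π
  have hF1 : F (v / w) = 2 * v / Real.pi := by
    rw [hF]
    have harg : ∀ t : ℝ, Real.sqrt (v ^ 2 - (v / w) ^ 2 * w ^ 2 * Real.cos (w * t) ^ 2)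
        = v * |Real.sin (w * t)| := by
      intro t
      have h1 : v ^ 2 - (v / w) ^ 2 * w ^ 2 * Real.cos (w * t) ^ 2
          = (v * Real.sin (w * t)) ^ 2 := by
        have h := Real.sin_sq_add_cos_sq (w * t)
        field_simp
        nlinarith
      rw [h1, Real.sqrt_sq_eq_abs, abs_mul, abs_of_pos hv]
    simp_rw [harg]
    rw [intervalIntegral.integral_const_mul]
    have hcomp : ∫ t in (0:ℝ)..T, |Real.sin (w * t)| =
        w⁻¹ • ∫ x in (w*0)..(w*T), |Real.sin x| := by
      rw [← intervalIntegral.integral_comp_mul_left (fun x => |Real.sin x|) hw.ne']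
    have hwT : w * T = 2 * Real.pi := by rw [hT]; field_simp
    rw [hcomp, mul_zero, hwT, abs_sin_integral_two_pi]
    rw [hT]
    field_simp
    ring_nf
    rw [mul_inv_cancel₀ hw.ne', one_mul]
  -- strict antitonicity
  have hanti : StrictAntiOn F (Set.Icc 0 (v / w)) := by
    intro a ha b hb hab
    rw [hF, hF]
    have hint : (∫ t in (0:ℝ)..T, g b t) < ∫ t in (0:ℝ)..T, g a t := by
      apply intervalIntegral.integral_lt_integral_of_continuousOn_of_le_of_exists_lt hT0
        (Continuous.continuousOn (by fun_prop)) (Continuous.continuousOn (by fun_prop))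
      · intro x _
        apply Real.sqrt_le_sqrt
        have hab2 : a ^ 2 ≤ b ^ 2 := by nlinarith [ha.1]
        have hc2 : (0:ℝ) ≤ w ^ 2 * Real.cos (w * x) ^ 2 := by positivity
        nlinarith [mul_le_mul_of_nonneg_right hab2 hc2]
      · refine ⟨0, ⟨le_refl 0, hT0.le⟩, ?_⟩
        show Real.sqrt _ < Real.sqrt _
        simp only [mul_zero, Real.cos_zero, one_pow, mul_one]
        apply Real.sqrt_lt_sqrt
        · have : b * w ≤ v := by
            have := hb.2
            calc b * w ≤ (v / w) * w := by nlinarith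
              _ = v := by field_simp
          nlinarith [mul_nonneg hb.1 hw.le]
        · have ha0 := ha.1
          have h2 : a ^ 2 < b ^ 2 := by nlinarith
          have h3 : (0:ℝ) < (b ^ 2 - a ^ 2) * w ^ 2 :=
            mul_pos (by linarith) (by positivity)
          nlinarith
    have h1T : (0:ℝ) < 1 / T := by positivity
    exact mul_lt_mul_of_pos_left hint h1T
  have hvw0 : (0:ℝ) ≤ v / w := by positivity
  have h0mem : (0:ℝ) ∈ Set.Icc 0 (v / w) := ⟨le_refl 0, hvw0⟩
  have hvwmem : v / w ∈ Set.Icc 0 (v / w) := ⟨hvw0, le_refl _⟩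
  refine ⟨hcF.continuousOn, hanti, hF0, hF1, ?_, hanti.injOn, ?_⟩
  · intro x hx
    constructor
    · rw [← hF1]
      rcases eq_or_lt_of_le hx.2 with h | h
      · rw [h]
      · exact (hanti hx hvwmem h).le
    · rw [← hF0]
      rcases eq_or_lt_of_le hx.1 with h | h
      · rw [← h]
      · exact (hanti h0mem hx h).le
  · have := intermediate_value_Icc' hvw0 hcF.continuousOn
    rw [hF0, hF1] at this
    exact this
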